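/- Let Ã : (0,∞) → ℝ be twice continuously differentiable with Ã''(y) = −((y²/16) Ã(y) + (y/4) Ã(y)³ + (3/16) Ã(y)⁵) for all y > 0. Define E₁(y) = (1/2) Ã'(y)² + (y²/32) Ã(y)² + (y/16) Ã(y)⁴ + (1/32) Ã(y)⁶ and E₂(y) = E₁(y)/y + Ã(y) Ã'(y)/(2 y²) + Ã(y)²/(2 y³). Then for every y > 0, E₂ is differentiable with E₂'(y) = −Ã(y)⁶/(8 y²) − Ã(y)⁴/(8 y) − 3 Ã(y)²/(2 y⁴); in particular E₂ is nonincreasing on (0,∞). -/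

import Mathlib

/-- For a C² solution of the reflected amplitude equation
`Ã'' = −((y²/16) Ã + (y/4) Ã³ + (3/16) Ã⁵)` on `(0,∞)`, the modified energy
`E₂ = E₁/y + Ã Ã'/(2y²) + Ã²/(2y³)` (with `E₁ = (1/2) Ã'² + (y²/32) Ã² + (y/16) Ã⁴ +
(1/32) Ã⁶`) has derivative `−Ã⁶/(8y²) − Ã⁴/(8y) − 3Ã²/(2y⁴)` at each `y > 0`; in
particular `E₂` is nonincreasing on `(0,∞)`. -/
theorem stmt_11 (A : ℝ → ℝ) (hA : ContDiffOn ℝ 2 A (Set.Ioi (0 : ℝ)))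
    (hODE : ∀ y : ℝ, 0 < y →
      deriv (deriv A) y = -(y ^ 2 / 16 * A y + y / 4 * A y ^ 3 + 3 / 16 * A y ^ 5)) :
    (∀ y : ℝ, 0 < y →
      HasDerivAt
        (fun z : ℝ =>
          (1 / 2 * deriv A z ^ 2 + z ^ 2 / 32 * A z ^ 2 + z / 16 * A z ^ 4
            + 1 / 32 * A z ^ 6) / z
          + A z * deriv A z / (2 * z ^ 2) + A z ^ 2 / (2 * z ^ 3))
        (-(A y ^ 6) / (8 * y ^ 2) - A y ^ 4 / (8 * y) - 3 * A y ^ 2 / (2 * y ^ 4)) y) ∧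
    AntitoneOn
      (fun z : ℝ =>
        (1 / 2 * deriv A z ^ 2 + z ^ 2 / 32 * A z ^ 2 + z / 16 * A z ^ 4
          + 1 / 32 * A z ^ 6) / z
        + A z * deriv A z / (2 * z ^ 2) + A z ^ 2 / (2 * z ^ 3))
      (Set.Ioi (0 : ℝ)) := by
  have hdA : ContDiffOn ℝ 1 (deriv A) (Set.Ioi (0 : ℝ)) := by
    have := hA.deriv_of_isOpen isOpen_Ioi (m := 1) (by norm_num)
    exact this
  have key : ∀ y : ℝ, 0 < y →
      HasDerivAt
        (fun z : ℝ =>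
          (1 / 2 * deriv A z ^ 2 + z ^ 2 / 32 * A z ^ 2 + z / 16 * A z ^ 4
            + 1 / 32 * A z ^ 6) / z
          + A z * deriv A z / (2 * z ^ 2) + A z ^ 2 / (2 * z ^ 3))
        (-(A y ^ 6) / (8 * y ^ 2) - A y ^ 4 / (8 * y) - 3 * A y ^ 2 / (2 * y ^ 4)) y := by
    intro y hy
    have hmem : Set.Ioi (0 : ℝ) ∈ nhds y := isOpen_Ioi.mem_nhds hy
    have hA1 : HasDerivAt A (deriv A y) y :=
      ((hA.contDiffAt hmem).differentiableAt (by norm_num)).hasDerivAt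
    have hA2 : HasDerivAt (deriv A) (deriv (deriv A) y) y :=
      ((hdA.contDiffAt hmem).differentiableAt (by norm_num)).hasDerivAt
    have hyne : y ≠ 0 := ne_of_gt hy
    have h2y2 : (2 : ℝ) * y ^ 2 ≠ 0 := by positivity
    have h2y3 : (2 : ℝ) * y ^ 3 ≠ 0 := by positivity
    have hE1 : HasDerivAt
        (fun z : ℝ => 1 / 2 * deriv A z ^ 2 + z ^ 2 / 32 * A z ^ 2 + z / 16 * A z ^ 4
          + 1 / 32 * A z ^ 6)
        (1 / 2 * ((2 : ℕ) * deriv A y ^ 1 * deriv (deriv A) y)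
          + (((2 : ℕ) * y ^ 1) / 32 * A y ^ 2
            + y ^ 2 / 32 * ((2 : ℕ) * A y ^ 1 * deriv A y))
          + ((1 / 16) * A y ^ 4 + y / 16 * ((4 : ℕ) * A y ^ 3 * deriv A y))
          + 1 / 32 * ((6 : ℕ) * A y ^ 5 * deriv A y)) y := by
      exact ((((hA2.pow 2).const_mul (1 / 2)).add
        (((hasDerivAt_pow 2 y).div_const 32).mul (hA1.pow 2))).add
        (((hasDerivAt_id y).div_const 16).mul (hA1.pow 4))).add
        ((hA1.pow 6).const_mul (1 / 32))
    have hT := ((hE1.div (hasDerivAt_id' (x := y)) hyne).add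
      ((hA1.mul hA2).div ((hasDerivAt_pow 2 y).const_mul 2) h2y2)).add
      ((hA1.pow 2).div ((hasDerivAt_pow 3 y).const_mul 2) h2y3)
    convert hT using 1
    case e'_4 => rfl
    case e'_5 => rfl
    case e'_8 => rfl
    rw [hODE y hy]
    simp only [Pi.mul_apply, Pi.pow_apply]
    field_simp
    ring
  refine ⟨key, ?_⟩
  apply antitoneOn_of_deriv_nonpos (convex_Ioi 0)
  · intro x hx
    exact (key x hx).continuousAt.continuousWithinAt
  · intro x hx
    rw [interior_Ioi] at hx
    exact (key x hx).differentiableAt.differentiableWithinAt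
  · intro x hx
    rw [interior_Ioi] at hx
    have hx0 : (0:ℝ) < x := hx
    rw [(key x hx).deriv]
    have h1 : (0:ℝ) ≤ A x ^ 6 / (8 * x ^ 2) := by positivity
    have h2 : (0:ℝ) ≤ A x ^ 4 / (8 * x) := by positivity
    have h3 : (0:ℝ) ≤ 3 * A x ^ 2 / (2 * x ^ 4) := by positivity
    have e1 : -A x ^ 6 / (8 * x ^ 2) = -(A x ^ 6 / (8 * x ^ 2)) := by ring
    have e2 : -A x ^ 6 / (8 * x ^ 2) - A x ^ 4 / (8 * x) - 3 * A x ^ 2 / (2 * x ^ 4) ≤ 0 := by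
      rw [e1]; linarith
    exact e2
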